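/- Let (𝒰,𝒱) be a cotorsion pair on an exact category 𝓑 with enough projectives and injectives, 𝒲 = 𝒰∩𝒱. For a morphism f : A → B in 𝓑, the image σ⁺(f) : A⁺ → B⁺ of f under the reflection functor σ⁺ is zero in 𝓑/𝒲 if and only if f factors through an object of 𝒰. In particular, σ⁺(B) = 0 in 𝓑/𝒲 if and only if B ∈ 𝒰 (up to isomorphism in 𝓑/𝒲). -/

import Mathlib

open CategoryTheory Limits ZeroObject

set_option linter.unusedSectionVars false

universe v u

variable (C : Type u) [Category.{v} C] [Preadditive C] [HasZeroObject C]
  [HasBinaryBiproducts C]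

/-- An exact structure (in the sense of Quillen) on an additive category,
given by a class of short exact sequences (conflations). -/
structure ExactStructure : Type (max u (v + 1)) where
  /-- the class of short exact sequences -/
  IsSES : ∀ {A B X : C}, (A ⟶ B) → (B ⟶ X) → Prop
  comp_zero : ∀ {A B X : C} {f : A ⟶ B} {g : B ⟶ X}, IsSES f g → f ≫ g = 0
  isKernel : ∀ {A B X : C} {f : A ⟶ B} {g : B ⟶ X} (h : IsSES f g),
      Nonempty (IsLimit (KernelFork.ofι f (comp_zero h)))
  isCokernel : ∀ {A B X : C} {f : A ⟶ B} {g : B ⟶ X} (h : IsSES f g),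
      Nonempty (IsColimit (CokernelCofork.ofπ g (comp_zero h)))
  ses_iso_congr : ∀ {A B X A' B' X' : C} {f : A ⟶ B} {g : B ⟶ X}
      (eA : A' ≅ A) (eB : B ≅ B') (eX : X ≅ X'), IsSES f g →
      IsSES (eA.hom ≫ f ≫ eB.hom) (eB.inv ≫ g ≫ eX.hom)
  id_ses : ∀ A : C, IsSES (𝟙 A) (0 : A ⟶ 0)
  id_ses' : ∀ A : C, IsSES (0 : (0 : C) ⟶ A) (𝟙 A)
  infl_comp : ∀ {A B X : C} (f : A ⟶ B) (f' : B ⟶ X),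
      (∃ (Z : C) (g : B ⟶ Z), IsSES f g) → (∃ (Z : C) (g : X ⟶ Z), IsSES f' g) →
      ∃ (Z : C) (g : X ⟶ Z), IsSES (f ≫ f') g
  defl_comp : ∀ {A B X : C} (g : A ⟶ B) (g' : B ⟶ X),
      (∃ (Z : C) (f : Z ⟶ A), IsSES f g) → (∃ (Z : C) (f : Z ⟶ B), IsSES f g') →
      ∃ (Z : C) (f : Z ⟶ A), IsSES f (g ≫ g')
  pushout_infl : ∀ {A B A' : C} (f : A ⟶ B) (a : A ⟶ A'),
      (∃ (Z : C) (g : B ⟶ Z), IsSES f g) →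
      ∃ (P : C) (f' : A' ⟶ P) (b : B ⟶ P), IsPushout a f f' b ∧
        ∃ (Z : C) (g : P ⟶ Z), IsSES f' g
  pullback_defl : ∀ {B X X' : C} (g : B ⟶ X) (x : X' ⟶ X),
      (∃ (Z : C) (f : Z ⟶ B), IsSES f g) →
      ∃ (P : C) (g' : P ⟶ X') (b : P ⟶ B), IsPullback g' b x g ∧
        ∃ (Z : C) (f : Z ⟶ P), IsSES f g'

variable {C}

namespace ExactStructure

variable (E : ExactStructure C)

/-- inflations (admissible monomorphisms) -/
def Infl {A B : C} (f : A ⟶ B) : Prop := ∃ (X : C) (g : B ⟶ X), E.IsSES f g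

/-- deflations (admissible epimorphisms) -/
def Defl {B X : C} (g : B ⟶ X) : Prop := ∃ (A : C) (f : A ⟶ B), E.IsSES f g

/-- projective objects relative to the exact structure -/
def Proj (P : C) : Prop :=
  ∀ ⦃B X : C⦄ (g : B ⟶ X), E.Defl g → ∀ h : P ⟶ X, ∃ l : P ⟶ B, l ≫ g = h

/-- injective objects relative to the exact structure -/
def Inj (I : C) : Prop :=
  ∀ ⦃A B : C⦄ (f : A ⟶ B), E.Infl f → ∀ h : A ⟶ I, ∃ l : B ⟶ I, f ≫ l = h

/-- the exact category has enough projectives -/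
def EnoughProj : Prop :=
  ∀ X : C, ∃ (P K : C) (i : K ⟶ P) (p : P ⟶ X), E.Proj P ∧ E.IsSES i p

/-- the exact category has enough injectives -/
def EnoughInj : Prop :=
  ∀ X : C, ∃ (I Z : C) (i : X ⟶ I) (p : I ⟶ Z), E.Inj I ∧ E.IsSES i p

end ExactStructure

/-- a morphism factors through an object of a given class of objects -/
def FactorsThru (S : Set C) {X Y : C} (f : X ⟶ Y) : Prop :=
  ∃ (W : C) (a : X ⟶ W) (b : W ⟶ Y), W ∈ S ∧ a ≫ b = f

/-- A cotorsion pair `(𝒰, 𝒱)` on the exact category `(C, E)`. -/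
structure CotorsionPair (E : ExactStructure C) where
  U : Set C
  V : Set C
  U_summand : ∀ ⦃X Z : C⦄, Z ∈ U → (∃ (i : X ⟶ Z) (r : Z ⟶ X), i ≫ r = 𝟙 X) → X ∈ U
  V_summand : ∀ ⦃X Z : C⦄, Z ∈ V → (∃ (i : X ⟶ Z) (r : Z ⟶ X), i ≫ r = 𝟙 X) → X ∈ V
  U_add : ∀ ⦃X Y : C⦄, X ∈ U → Y ∈ U → (X ⊞ Y) ∈ U
  V_add : ∀ ⦃X Y : C⦄, X ∈ V → Y ∈ V → (X ⊞ Y) ∈ V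
  ext_vanish : ∀ ⦃A B X : C⦄ {f : A ⟶ B} {g : B ⟶ X}, E.IsSES f g → X ∈ U → A ∈ V →
      ∃ r : B ⟶ A, f ≫ r = 𝟙 A
  res : ∀ B : C, ∃ (VB UB : C) (i : VB ⟶ UB) (p : UB ⟶ B),
      VB ∈ V ∧ UB ∈ U ∧ E.IsSES i p
  cores : ∀ B : C, ∃ (VB UB : C) (i : B ⟶ VB) (p : VB ⟶ UB),
      VB ∈ V ∧ UB ∈ U ∧ E.IsSES i p

namespace CotorsionPair

variable {E : ExactStructure C} (CP : CotorsionPair E)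

/-- `𝒲 = 𝒰 ∩ 𝒱` -/
def W : Set C := CP.U ∩ CP.V

/-- `𝓑⁺`: objects admitting a short exact sequence `V ↣ W ↠ B` with `V ∈ 𝒱`, `W ∈ 𝒲`. -/
def Bplus : Set C :=
  {B | ∃ (V₀ W₀ : C) (i : V₀ ⟶ W₀) (p : W₀ ⟶ B), V₀ ∈ CP.V ∧ W₀ ∈ CP.W ∧ E.IsSES i p}

/-- `𝓑⁻`: objects admitting a short exact sequence `B ↣ W ↠ U` with `W ∈ 𝒲`, `U ∈ 𝒰`. -/
def Bminus : Set C :=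
  {B | ∃ (W₀ U₀ : C) (i : B ⟶ W₀) (p : W₀ ⟶ U₀), W₀ ∈ CP.W ∧ U₀ ∈ CP.U ∧ E.IsSES i p}

/-- the heart subcategory `𝓗 = 𝓑⁺ ∩ 𝓑⁻` -/
def Heart : Set C := CP.Bplus ∩ CP.Bminus

/-- the ideal relation defining the additive quotient `𝓑/𝒲` -/
def wRel : HomRel C := fun {X Y} f g =>
  ∃ (W : C) (a : X ⟶ W) (b : W ⟶ Y), W ∈ CP.W ∧ a ≫ b = f - g

/-- the quotient category `𝓑/𝒲` -/
abbrev QW := CategoryTheory.Quotient CP.wRel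

/-- the quotient functor `π : 𝓑 → 𝓑/𝒲` -/
abbrev qf : C ⥤ CP.QW := Quotient.functor _

/-- `𝓑⁺/𝒲` as a full subcategory of `𝓑/𝒲` -/
abbrev BplusCat := ObjectProperty.FullSubcategory (fun X : CP.QW => X.as ∈ CP.Bplus)

/-- `𝓑⁻/𝒲` as a full subcategory of `𝓑/𝒲` -/
abbrev BminusCat := ObjectProperty.FullSubcategory (fun X : CP.QW => X.as ∈ CP.Bminus)

/-- the heart `𝓗/𝒲` as a full subcategory of `𝓑/𝒲` -/
abbrev HeartCat := ObjectProperty.FullSubcategory (fun X : CP.QW => X.as ∈ CP.Heart)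

/-- the inclusion `𝓑⁺/𝒲 ↪ 𝓑/𝒲` -/
abbrev inclPlus : CP.BplusCat ⥤ CP.QW := ObjectProperty.ι _

/-- the inclusion `𝓑⁻/𝒲 ↪ 𝓑/𝒲` -/
abbrev inclMinus : CP.BminusCat ⥤ CP.QW := ObjectProperty.ι _

/-- the inclusion `𝓗/𝒲 ↪ 𝓑/𝒲` -/
abbrev inclHeart : CP.HeartCat ⥤ CP.QW := ObjectProperty.ι _

/-- `add(𝒰 ∗ 𝒱)`: objects `X` admitting a short exact sequence `U ↣ X ⊕ Y ↠ V`
with `U ∈ 𝒰`, `V ∈ 𝒱`. -/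
def addUV : Set C :=
  {X | ∃ (Y U₀ V₀ : C) (i : U₀ ⟶ X ⊞ Y) (p : X ⊞ Y ⟶ V₀),
    U₀ ∈ CP.U ∧ V₀ ∈ CP.V ∧ E.IsSES i p}

end CotorsionPair


variable {C : Type u} [Category.{v} C] [Preadditive C] [HasZeroObject C]
  [HasBinaryBiproducts C] {E : ExactStructure C}

namespace ExactStructure

lemma mono_of_ses {A B X : C} {f : A ⟶ B} {g : B ⟶ X} (h : E.IsSES f g) : Mono f := by
  obtain ⟨hl⟩ := E.isKernel h
  exact ⟨fun a b hab => Fork.IsLimit.hom_ext hl (by simpa using hab)⟩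

lemma epi_of_ses {A B X : C} {f : A ⟶ B} {g : B ⟶ X} (h : E.IsSES f g) : Epi g := by
  obtain ⟨hc⟩ := E.isCokernel h
  exact ⟨fun a b hab => Cofork.IsColimit.hom_ext hc (by simpa using hab)⟩

lemma ses_lift {A B X : C} {f : A ⟶ B} {g : B ⟶ X} (h : E.IsSES f g)
    {T : C} (t : T ⟶ B) (ht : t ≫ g = 0) : ∃ s : T ⟶ A, s ≫ f = t := by
  obtain ⟨hl⟩ := E.isKernel h
  obtain ⟨l, hl'⟩ := KernelFork.IsLimit.lift' hl t ht
  exact ⟨l, by simpa using hl'⟩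

lemma ses_desc {A B X : C} {f : A ⟶ B} {g : B ⟶ X} (h : E.IsSES f g)
    {T : C} (t : B ⟶ T) (ht : f ≫ t = 0) : ∃ s : X ⟶ T, g ≫ s = t := by
  obtain ⟨hc⟩ := E.isCokernel h
  obtain ⟨l, hl'⟩ := CokernelCofork.IsColimit.desc' hc t ht
  exact ⟨l, by simpa using hl'⟩

/-- transport an SES along an alternative kernel -/
lemma ses_of_isLimit {A A' B X : C} {f : A ⟶ B} {g : B ⟶ X} (h : E.IsSES f g)
    {f' : A' ⟶ B} (w : f' ≫ g = 0) (hl : IsLimit (KernelFork.ofι f' w)) :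
    E.IsSES f' g := by
  obtain ⟨hl₀⟩ := E.isKernel h
  let e : A' ≅ A := IsLimit.conePointUniqueUpToIso hl hl₀
  have he : e.hom ≫ f = f' := by
    have := IsLimit.conePointUniqueUpToIso_hom_comp hl hl₀ WalkingParallelPair.zero
    simpa using this
  have := E.ses_iso_congr e (Iso.refl B) (Iso.refl X) h
  simpa [he] using this

/-- transport an SES along an alternative cokernel -/
lemma ses_of_isColimit {A B X X' : C} {f : A ⟶ B} {g : B ⟶ X} (h : E.IsSES f g)
    {g' : B ⟶ X'} (w : f ≫ g' = 0) (hc : IsColimit (CokernelCofork.ofπ g' w)) :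
    E.IsSES f g' := by
  obtain ⟨hc₀⟩ := E.isCokernel h
  let e : X ≅ X' := IsColimit.coconePointUniqueUpToIso hc₀ hc
  have he : g ≫ e.hom = g' := by
    have := IsColimit.comp_coconePointUniqueUpToIso_hom hc₀ hc WalkingParallelPair.one
    simpa using this
  have := E.ses_iso_congr (Iso.refl A) (Iso.refl B) e h
  simpa [he] using this

end ExactStructure

namespace ExactStructure

/-- the pullback of a deflation has the same kernel -/
lemma pullback_ker {K B X X' : C} {k : K ⟶ B} {p : B ⟶ X} (h : E.IsSES k p) (x : X' ⟶ X) :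
    ∃ (P : C) (g' : P ⟶ X') (b : P ⟶ B) (k' : K ⟶ P),
      IsPullback g' b x p ∧ E.IsSES k' g' ∧ k' ≫ b = k := by
  obtain ⟨P, g', b, hpb, Z, fZ, hZ⟩ := E.pullback_defl p x ⟨K, k, h⟩
  have hk0 : k ≫ p = 0 := E.comp_zero h
  have hcone : (0 : K ⟶ X') ≫ x = k ≫ p := by simp [hk0]
  set k' : K ⟶ P := hpb.lift 0 k hcone with hk'
  have hk'g : k' ≫ g' = 0 := hpb.lift_fst _ _ _
  have hk'b : k' ≫ b = k := hpb.lift_snd _ _ _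
  have hmk : Mono k := mono_of_ses h
  have hmk' : Mono k' := by
    have : Mono (k' ≫ b) := by rw [hk'b]; exact hmk
    exact mono_of_mono k' b
  have hlim : IsLimit (KernelFork.ofι k' hk'g) := by
    refine KernelFork.IsLimit.ofι' _ _ (fun {T} t ht => ?_)
    have h0 : (t ≫ b) ≫ p = 0 := by
      rw [Category.assoc, ← hpb.w, reassoc_of% ht]
      simp
    refine ⟨(E.ses_lift h (t ≫ b) h0).choose, hpb.hom_ext ?_ ?_⟩
    · rw [Category.assoc, hk'g, Limits.comp_zero, ht]
    · rw [Category.assoc, hk'b, (E.ses_lift h (t ≫ b) h0).choose_spec]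
  exact ⟨P, g', b, k', hpb, E.ses_of_isLimit hZ hk'g hlim, hk'b⟩

/-- the pushout of an inflation has the same cokernel (with explicit pushout data) -/
lemma pushout_coker {A B X V' : C} {i : A ⟶ B} {q : B ⟶ X} (h : E.IsSES i q) (a : A ⟶ V') :
    ∃ (P : C) (i' : V' ⟶ P) (b : B ⟶ P) (q' : P ⟶ X),
      IsPushout a i i' b ∧ E.IsSES i' q' ∧ b ≫ q' = q := by
  obtain ⟨P, i', b, hpo, Z, g, hZ⟩ := E.pushout_infl i a ⟨X, q, h⟩
  have hq0 : i ≫ q = 0 := E.comp_zero h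
  have hcone : a ≫ (0 : V' ⟶ X) = i ≫ q := by simp [hq0]
  set q' : P ⟶ X := hpo.desc 0 q hcone with hq'
  have hi'q : i' ≫ q' = 0 := hpo.inl_desc _ _ _
  have hbq : b ≫ q' = q := hpo.inr_desc _ _ _
  have heq : Epi q := epi_of_ses h
  have heq' : Epi q' := by
    have : Epi (b ≫ q') := by rw [hbq]; exact heq
    exact epi_of_epi b q'
  have hcolim : IsColimit (CokernelCofork.ofπ q' hi'q) := by
    refine CokernelCofork.IsColimit.ofπ' _ _ (fun {T} t ht => ?_)
    have h0 : i ≫ (b ≫ t) = 0 := by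
      rw [← Category.assoc, ← hpo.w, Category.assoc, ht, Limits.comp_zero]
    refine ⟨(E.ses_desc h (b ≫ t) h0).choose, hpo.hom_ext ?_ ?_⟩
    · rw [← Category.assoc, hi'q, Limits.zero_comp, ht]
    · rw [← Category.assoc, hbq, (E.ses_desc h (b ≫ t) h0).choose_spec]
  exact ⟨P, i', b, q', hpo, E.ses_of_isColimit hZ hi'q hcolim, hbq⟩

/-- the pushout of a deflation along an inflation is a deflation with the same kernel -/
lemma pushout_ses {VB UB B W0B Bp : C} {vB : VB ⟶ UB} {uB : UB ⟶ B}
    {wB' : UB ⟶ W0B} {αB : B ⟶ Bp} {wB : W0B ⟶ Bp}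
    (h1 : E.IsSES vB uB) (hw : E.Infl wB') (hpo : IsPushout uB wB' αB wB) :
    E.IsSES (vB ≫ wB') wB := by
  obtain ⟨Z, g, hZ⟩ := E.infl_comp vB wB' ⟨B, uB, h1⟩ hw
  have hzero : (vB ≫ wB') ≫ wB = 0 := by
    rw [Category.assoc, ← hpo.w, ← Category.assoc, E.comp_zero h1, Limits.zero_comp]
  have hepi : Epi uB := epi_of_ses h1
  have hepiw : Epi wB := by
    refine ⟨fun u u' huu => hpo.hom_ext (hepi.left_cancellation _ _ ?_) huu⟩
    rw [← Category.assoc, hpo.w, Category.assoc, huu, ← Category.assoc, ← hpo.w,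
      Category.assoc]
  have hcolim : IsColimit (CokernelCofork.ofπ wB hzero) := by
    refine CokernelCofork.IsColimit.ofπ' _ _ (fun {T} t ht => ?_)
    have h0 : vB ≫ (wB' ≫ t) = 0 := by rw [← Category.assoc]; exact ht
    exact ⟨hpo.desc (E.ses_desc h1 (wB' ≫ t) h0).choose t
      (E.ses_desc h1 (wB' ≫ t) h0).choose_spec, hpo.inr_desc _ _ _⟩
  exact E.ses_of_isColimit hZ hzero hcolim

/-- the canonical pushout square is also "weakly cartesian": cones over it lift -/
lemma pushout_lift {VB UB B W0B U0B Bp : C} {vB : VB ⟶ UB} {uB : UB ⟶ B}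
    {wB' : UB ⟶ W0B} {w0B : W0B ⟶ U0B} {αB : B ⟶ Bp} {wB : W0B ⟶ Bp}
    (h1 : E.IsSES vB uB) (h2 : E.IsSES wB' w0B) (hpo : IsPushout uB wB' αB wB)
    (hmono : Mono αB) {A : C} (f : A ⟶ B) (g : A ⟶ W0B) (hfg : f ≫ αB = g ≫ wB) :
    ∃ l : A ⟶ UB, l ≫ uB = f := by
  have hc : uB ≫ (0 : B ⟶ U0B) = wB' ≫ w0B := by rw [E.comp_zero h2, Limits.comp_zero]
  set φ : Bp ⟶ U0B := hpo.desc 0 w0B hc with hφ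
  have hαφ : αB ≫ φ = 0 := hpo.inl_desc _ _ _
  have hwφ : wB ≫ φ = w0B := hpo.inr_desc _ _ _
  have hg0 : g ≫ w0B = 0 := by
    rw [← hwφ, ← Category.assoc, ← hfg, Category.assoc, hαφ, Limits.comp_zero]
  obtain ⟨l, hl⟩ := E.ses_lift h2 g hg0
  refine ⟨l, hmono.right_cancellation _ _ ?_⟩
  rw [Category.assoc, hpo.w, ← Category.assoc, hl, hfg]

end ExactStructure

section FactorsThruLemmas

lemma factorsThru_add {S : Set C}
    (hS : ∀ ⦃X Y : C⦄, X ∈ S → Y ∈ S → (X ⊞ Y) ∈ S) {X Y : C} {f g : X ⟶ Y}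
    (hf : FactorsThru S f) (hg : FactorsThru S g) : FactorsThru S (f + g) := by
  obtain ⟨W₁, a₁, b₁, hW₁, hab₁⟩ := hf
  obtain ⟨W₂, a₂, b₂, hW₂, hab₂⟩ := hg
  exact ⟨W₁ ⊞ W₂, biprod.lift a₁ a₂, biprod.desc b₁ b₂, hS hW₁ hW₂,
    by rw [biprod.lift_desc, hab₁, hab₂]⟩

lemma factorsThru_precomp {S : Set C} {X Y Z : C} {f : Y ⟶ Z} (g : X ⟶ Y)
    (hf : FactorsThru S f) : FactorsThru S (g ≫ f) := by
  obtain ⟨W₁, a, b, hW₁, hab⟩ := hf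
  exact ⟨W₁, g ≫ a, b, hW₁, by rw [Category.assoc, hab]⟩

lemma factorsThru_postcomp {S : Set C} {X Y Z : C} {f : X ⟶ Y} (g : Y ⟶ Z)
    (hf : FactorsThru S f) : FactorsThru S (f ≫ g) := by
  obtain ⟨W₁, a, b, hW₁, hab⟩ := hf
  exact ⟨W₁, a, b ≫ g, hW₁, by rw [← Category.assoc, hab]⟩

end FactorsThruLemmas

namespace CotorsionPair

variable {E : ExactStructure C} (CP : CotorsionPair E)

lemma W_mem_U {X : C} (h : X ∈ CP.W) : X ∈ CP.U := h.1
lemma W_mem_V {X : C} (h : X ∈ CP.W) : X ∈ CP.V := h.2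

lemma zero_mem_U : (0 : C) ∈ CP.U := by
  obtain ⟨VB, UB, i, p, hV, hU, _⟩ := CP.res (0 : C)
  exact CP.U_summand hU ⟨0, 0, (isZero_zero C).eq_of_src _ _⟩

lemma zero_mem_V : (0 : C) ∈ CP.V := by
  obtain ⟨VB, UB, i, p, hV, hU, _⟩ := CP.res (0 : C)
  exact CP.V_summand hV ⟨0, 0, (isZero_zero C).eq_of_src _ _⟩

lemma zero_mem_W : (0 : C) ∈ CP.W := ⟨CP.zero_mem_U, CP.zero_mem_V⟩

lemma W_add ⦃X Y : C⦄ (hX : X ∈ CP.W) (hY : Y ∈ CP.W) : (X ⊞ Y) ∈ CP.W :=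
  ⟨CP.U_add hX.1 hY.1, CP.V_add hX.2 hY.2⟩

lemma wRel_iff {X Y : C} (f g : X ⟶ Y) : CP.wRel f g ↔ FactorsThru CP.W (f - g) := by
  constructor
  · rintro ⟨W₀, a, b, hW, hab⟩; exact ⟨W₀, a, b, hW, hab⟩
  · rintro ⟨W₀, a, b, hW, hab⟩; exact ⟨W₀, a, b, hW, hab⟩

instance wRel_congruence : Congruence CP.wRel where
  equivalence := by
    refine ⟨fun f => ⟨0, 0, 0, CP.zero_mem_W, by simp⟩, ?_, ?_⟩
    · rintro f g ⟨W₀, a, b, hW, hab⟩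
      exact ⟨W₀, -a, b, hW, by rw [Preadditive.neg_comp, hab, neg_sub]⟩
    · rintro f g h ⟨W₁, a₁, b₁, hW₁, hab₁⟩ ⟨W₂, a₂, b₂, hW₂, hab₂⟩
      refine ⟨W₁ ⊞ W₂, biprod.lift a₁ a₂, biprod.desc b₁ b₂, CP.W_add hW₁ hW₂, ?_⟩
      rw [biprod.lift_desc, hab₁, hab₂]; abel
  comp_left := by
    rintro X Y Z f g g' ⟨W₀, a, b, hW, hab⟩
    exact ⟨W₀, f ≫ a, b, hW, by rw [Category.assoc, hab, Preadditive.comp_sub]⟩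
  comp_right := by
    rintro X Y Z f f' g ⟨W₀, a, b, hW, hab⟩
    exact ⟨W₀, a, b ≫ g, hW, by rw [← Category.assoc, hab, Preadditive.sub_comp]⟩

/-- maps from `𝒰` into `B` lift along deflations with kernel in `𝒱` -/
lemma lift_of_U {K B X : C} {k : K ⟶ B} {p : B ⟶ X} (h : E.IsSES k p)
    (hK : K ∈ CP.V) {X' : C} (hX' : X' ∈ CP.U) (x : X' ⟶ X) :
    ∃ l : X' ⟶ B, l ≫ p = x := by
  obtain ⟨P, g', b, k', hpb, hses, hk'b⟩ := E.pullback_ker h x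
  obtain ⟨r, hr⟩ := CP.ext_vanish hses hX' hK
  have h0 : k' ≫ (𝟙 P - r ≫ k') = 0 := by
    rw [Preadditive.comp_sub, Category.comp_id, ← Category.assoc, hr, Category.id_comp, sub_self]
  obtain ⟨s, hs⟩ := E.ses_desc hses (𝟙 P - r ≫ k') h0
  have hsg : s ≫ g' = 𝟙 X' := by
    have hepi : Epi g' := E.epi_of_ses hses
    apply hepi.left_cancellation
    rw [← Category.assoc, hs, Preadditive.sub_comp, Category.id_comp, Category.assoc,
      E.comp_zero hses, Limits.comp_zero, sub_zero, Category.comp_id]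
  refine ⟨s ≫ b, ?_⟩
  rw [Category.assoc, ← hpb.w, ← Category.assoc, hsg, Category.id_comp]

/-- maps into `𝒱` extend along inflations with cokernel in `𝒰` -/
lemma ext_of_V {A B X : C} {i : A ⟶ B} {q : B ⟶ X} (h : E.IsSES i q)
    (hX : X ∈ CP.U) {V' : C} (hV : V' ∈ CP.V) (a : A ⟶ V') :
    ∃ l : B ⟶ V', i ≫ l = a := by
  obtain ⟨P, i', b, q', hpo, hses, hbq⟩ := E.pushout_coker h a
  obtain ⟨r, hr⟩ := CP.ext_vanish hses hX hV
  exact ⟨b ≫ r, by rw [← Category.assoc, ← hpo.w, Category.assoc, hr, Category.comp_id]⟩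

end CotorsionPair

section Main

variable {E : ExactStructure C} (CP : CotorsionPair E)

/-- if `f` factors through `𝒰`, then `fp` factors through `𝒲` -/
lemma main1 {A B : C}
    {VB UB W0B Bp : C} {vB : VB ⟶ UB} {uB : UB ⟶ B} {wB' : UB ⟶ W0B}
    {αB : B ⟶ Bp} {wB : W0B ⟶ Bp}
    (hVB : VB ∈ CP.V) (hW0B : W0B ∈ CP.W)
    (h1B : E.IsSES vB uB) (hwB' : E.Infl wB') (hpoB : IsPushout uB wB' αB wB)
    {Ap U0A : C} {αA : A ⟶ Ap} {pA : Ap ⟶ U0A} (hU0A : U0A ∈ CP.U)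
    (h3A : E.IsSES αA pA)
    {f : A ⟶ B} {fp : Ap ⟶ Bp} (hfp : CP.wRel (αA ≫ fp) (f ≫ αB))
    (hf : FactorsThru CP.U f) : FactorsThru CP.W fp := by
  have sesB : E.IsSES (vB ≫ wB') wB := E.pushout_ses h1B hwB' hpoB
  obtain ⟨U₁, a, b, hU₁, hab⟩ := hf
  obtain ⟨l, hl⟩ := CP.lift_of_U sesB hVB hU₁ (b ≫ αB)
  obtain ⟨W₂, c, d, hW₂, hcd⟩ := hfp
  -- αA ≫ fp factors through W
  have key : FactorsThru CP.W (αA ≫ fp) := by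
    have : αA ≫ fp = (c ≫ d) + (a ≫ l) ≫ wB := by
      rw [Category.assoc, hl, hcd, ← Category.assoc, hab]; abel
    rw [this]
    exact factorsThru_add CP.W_add ⟨W₂, c, d, hW₂, rfl⟩
      ⟨W0B, a ≫ l, wB, hW0B, rfl⟩
  obtain ⟨W₃, e, h, hW₃, heh⟩ := key
  obtain ⟨m, hm⟩ := CP.ext_of_V h3A hU0A hW₃.2 e
  have h0 : αA ≫ (fp - m ≫ h) = 0 := by
    rw [Preadditive.comp_sub, ← Category.assoc, hm, heh, sub_self]
  obtain ⟨n, hn⟩ := E.ses_desc h3A (fp - m ≫ h) h0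
  obtain ⟨n', hn'⟩ := CP.lift_of_U sesB hVB hU0A n
  have : fp = (m ≫ h) + (pA ≫ n') ≫ wB := by
    rw [Category.assoc, hn', hn]; abel
  rw [this]
  exact factorsThru_add CP.W_add ⟨W₃, m, h, hW₃, rfl⟩ ⟨W0B, pA ≫ n', wB, hW0B, rfl⟩

/-- if `fp` factors through `𝒲`, then `f` factors through `𝒰` -/
lemma main2 {A B : C}
    {VB UB W0B U0B Bp : C} {vB : VB ⟶ UB} {uB : UB ⟶ B} {wB' : UB ⟶ W0B}
    {w0B : W0B ⟶ U0B} {αB : B ⟶ Bp} {wB : W0B ⟶ Bp} {pB : Bp ⟶ U0B}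
    (hVB : VB ∈ CP.V) (hUB : UB ∈ CP.U)
    (h1B : E.IsSES vB uB) (h2B : E.IsSES wB' w0B) (hpoB : IsPushout uB wB' αB wB)
    (h3B : E.IsSES αB pB)
    {Ap : C} {αA : A ⟶ Ap}
    {f : A ⟶ B} {fp : Ap ⟶ Bp} (hfp : CP.wRel (αA ≫ fp) (f ≫ αB))
    (hf : FactorsThru CP.W fp) : FactorsThru CP.U f := by
  have sesB : E.IsSES (vB ≫ wB') wB := E.pushout_ses h1B ⟨U0B, w0B, h2B⟩ hpoB
  obtain ⟨W₂, c, d, hW₂, hcd⟩ := hfp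
  have key : FactorsThru CP.W (f ≫ αB) := by
    have : f ≫ αB = (αA ≫ fp) + (-c) ≫ d := by
      rw [Preadditive.neg_comp, hcd]; abel
    rw [this]
    exact factorsThru_add CP.W_add (factorsThru_precomp αA hf) ⟨W₂, -c, d, hW₂, rfl⟩
  obtain ⟨W₃, e, h, hW₃, heh⟩ := key
  obtain ⟨h', hh'⟩ := CP.lift_of_U sesB hVB hW₃.1 h
  have hfg : f ≫ αB = (e ≫ h') ≫ wB := by
    rw [Category.assoc, hh', heh]
  obtain ⟨l, hl⟩ := E.pushout_lift h1B h2B hpoB (E.mono_of_ses h3B) f (e ≫ h') hfg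
  exact ⟨UB, l, uB, hUB, hl⟩

end Main

/-- `σ⁺(f) = 0` in `𝓑/𝒲` iff `f` factors through `𝒰`; in particular
`σ⁺(B) = 0` iff `B ∈ 𝒰` up to isomorphism in `𝓑/𝒲`. Here `A⁺` and `B⁺` are
given by their canonical push-out constructions, and `fp` is a representative of
`σ⁺(f)`, i.e. `α_A ≫ fp` agrees with `f ≫ α_B` modulo `𝒲`. -/
theorem stmt5 (E : ExactStructure C) (CP : CotorsionPair E)
    (hEP : E.EnoughProj) (hEI : E.EnoughInj)
    {A B : C} (f : A ⟶ B)
    {VA UA W0A U0A Ap : C} {vA : VA ⟶ UA} {uA : UA ⟶ A} {wA' : UA ⟶ W0A}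
    {w0A : W0A ⟶ U0A} {αA : A ⟶ Ap} {wA : W0A ⟶ Ap} {pA : Ap ⟶ U0A}
    (hVA : VA ∈ CP.V) (hUA : UA ∈ CP.U) (hW0A : W0A ∈ CP.W) (hU0A : U0A ∈ CP.U)
    (h1A : E.IsSES vA uA) (h2A : E.IsSES wA' w0A)
    (hpoA : IsPushout uA wA' αA wA) (h3A : E.IsSES αA pA)
    {VB UB W0B U0B Bp : C} {vB : VB ⟶ UB} {uB : UB ⟶ B} {wB' : UB ⟶ W0B}
    {w0B : W0B ⟶ U0B} {αB : B ⟶ Bp} {wB : W0B ⟶ Bp} {pB : Bp ⟶ U0B}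
    (hVB : VB ∈ CP.V) (hUB : UB ∈ CP.U) (hW0B : W0B ∈ CP.W) (hU0B : U0B ∈ CP.U)
    (h1B : E.IsSES vB uB) (h2B : E.IsSES wB' w0B)
    (hpoB : IsPushout uB wB' αB wB) (h3B : E.IsSES αB pB)
    {fp : Ap ⟶ Bp} (hfp : CP.wRel (αA ≫ fp) (f ≫ αB)) :
    (FactorsThru CP.W fp ↔ FactorsThru CP.U f) ∧
    (FactorsThru CP.W (𝟙 Bp) ↔
      ∃ U₁ ∈ CP.U, Nonempty (CP.qf.obj B ≅ CP.qf.obj U₁)) := by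
  constructor
  · constructor
    · exact fun hw => main2 CP hVB hUB h1B h2B hpoB h3B hfp hw
    · exact fun hf => main1 CP hVB hW0B h1B ⟨U0B, w0B, h2B⟩ hpoB hU0A h3A hfp hf
  · have hrefl : CP.wRel (αB ≫ 𝟙 Bp) (𝟙 B ≫ αB) :=
      ⟨0, 0, 0, CP.zero_mem_W, by simp⟩
    constructor
    · intro hw
      have hB : FactorsThru CP.U (𝟙 B) :=
        main2 CP hVB hUB h1B h2B hpoB h3B hrefl hw
      obtain ⟨U₁, a, b, hU₁, hab⟩ := hB
      exact ⟨B, CP.U_summand hU₁ ⟨a, b, hab⟩, ⟨Iso.refl _⟩⟩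
    · rintro ⟨U₁, hU₁, ⟨iso⟩⟩
      obtain ⟨g, hg⟩ := (CP.qf).map_surjective iso.hom
      obtain ⟨h, hh⟩ := (CP.qf).map_surjective iso.inv
      have hgh : CP.wRel (g ≫ h) (𝟙 B) := by
        rw [← Quotient.functor_map_eq_iff CP.wRel]
        rw [Functor.map_comp, hg, hh, iso.hom_inv_id, CategoryTheory.Functor.map_id]
      obtain ⟨W₄, a, b, hW₄, hab⟩ := hgh
      have hB : FactorsThru CP.U (𝟙 B) := by
        have : (𝟙 B : B ⟶ B) = g ≫ h + (-a) ≫ b := by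
          rw [Preadditive.neg_comp, hab]; abel
        rw [this]
        exact factorsThru_add CP.U_add ⟨U₁, g, h, hU₁, rfl⟩ ⟨W₄, -a, b, hW₄.1, rfl⟩
      exact main1 CP hVB hW0B h1B ⟨U0B, w0B, h2B⟩ hpoB hU0B h3B hrefl hB
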